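/- Let S be a commutative semiring and let 𝔭 be a proper z-ideal of S. Then 𝔭 is z-prime (for all z-ideals a, b, a·b ⊆ 𝔭 implies a ⊆ 𝔭 or b ⊆ 𝔭) if and only if 𝔭 is z-strongly irreducible (for all z-ideals a, b, a ∩ b ⊆ 𝔭 implies a ⊆ 𝔭 or b ⊆ 𝔭). -/
import Mathlib


/-- An ideal `I` of a commutative semiring is a *z-ideal* if for every `x ∈ I`,
the intersection of all maximal ideals containing `x` is contained in `I`. -/
def IsZIdeal {S : Type*} [CommSemiring S] (I : Ideal S) : Prop :=
  ∀ x ∈ I, sInf {m : Ideal S | m.IsMaximal ∧ x ∈ m} ≤ I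

theorem zPrime_iff_zStronglyIrreducible {S : Type*} [CommSemiring S] (p : Ideal S)
    (hp : p ≠ ⊤) (hpz : IsZIdeal p) :
    (∀ a b : Ideal S, IsZIdeal a → IsZIdeal b → a * b ≤ p → a ≤ p ∨ b ≤ p) ↔
      (∀ a b : Ideal S, IsZIdeal a → IsZIdeal b → a ⊓ b ≤ p → a ≤ p ∨ b ≤ p) := by
  constructor
  · intro h a b ha hb hle
    exact h a b ha hb (le_trans Ideal.mul_le_inf hle)
  · intro h a b ha hb hle
    refine h a b ha hb fun x hx => ?_
    have hx2 : x * x ∈ p := hle (Ideal.mul_mem_mul hx.1 hx.2)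
    apply hpz (x * x) hx2
    rw [Submodule.mem_sInf]
    rintro m ⟨hmax, hxx⟩
    exact (hmax.isPrime.mem_or_mem hxx).elim id id
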